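/- (Half-Cauchy as a scale mixture of gammas, pushforward form.) Let φ > 0 and let μ be the measure on (0,∞) with Lebesgue density τ ↦ √φ / (π √τ (τ + φ)). Then the pushforward of μ under the square root map τ ↦ √τ is the half-Cauchy measure on (0,∞) with scale √φ, i.e., the measure with Lebesgue density s ↦ 2√φ / (π (s² + φ)). Consequently, if τ ~ Gamma(1/2, λ) mixed over λ ~ Gamma(1/2, φ), then τ^(1/2) ~ C⁺(0, φ^(1/2)). -/

import Mathlib

open MeasureTheory Real

/-- Half-Cauchy as a scale mixture of gammas, pushforward form: if τ has density
√φ / (π √τ (τ + φ)) on (0,∞) then √τ is half-Cauchy with scale √φ. -/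
theorem lintegral_image_eq_lintegral_abs_deriv_mul' {s : Set ℝ} {f : ℝ → ℝ} {f' : ℝ → ℝ}
    (hs : MeasurableSet s) (hf' : ∀ x ∈ s, HasDerivWithinAt f (f' x) s x)
    (hf : Set.InjOn f s) (g : ℝ → ENNReal) :
    ∫⁻ x in f '' s, g x = ∫⁻ x in s, ENNReal.ofReal |f' x| * g (f x) := by
  simpa only [ContinuousLinearMap.det_toSpanSingleton] using
    MeasureTheory.lintegral_image_eq_lintegral_abs_det_fderiv_mul volume hs
      (fun x hx => (hf' x hx).hasFDerivWithinAt) hf g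

theorem sqrt_pushforward_half_cauchy (φ : ℝ) (hφ : 0 < φ) :
    Measure.map Real.sqrt
        ((volume.restrict (Set.Ioi (0 : ℝ))).withDensity fun τ =>
          ENNReal.ofReal (Real.sqrt φ / (Real.pi * Real.sqrt τ * (τ + φ)))) =
      (volume.restrict (Set.Ioi (0 : ℝ))).withDensity fun s =>
        ENNReal.ofReal (2 * Real.sqrt φ / (Real.pi * (s ^ 2 + φ))) := by
  ext A hA
  rw [Measure.map_apply Real.continuous_sqrt.measurable hA,
    withDensity_apply _ (Real.continuous_sqrt.measurable hA),
    withDensity_apply _ hA,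
    Measure.restrict_restrict (Real.continuous_sqrt.measurable hA),
    Measure.restrict_restrict hA]
  have hset : Real.sqrt ⁻¹' A ∩ Set.Ioi 0 = (fun s : ℝ => s ^ 2) '' (A ∩ Set.Ioi 0) := by
    ext τ
    constructor
    · rintro ⟨hτA, hτ⟩
      exact ⟨Real.sqrt τ, ⟨hτA, Real.sqrt_pos.2 hτ⟩, Real.sq_sqrt hτ.le⟩
    · rintro ⟨s, ⟨hsA, hs⟩, rfl⟩
      refine ⟨?_, by simpa using pow_pos hs 2⟩
      simpa [Real.sqrt_sq hs.le] using hsA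
  have hinj : Set.InjOn (fun s : ℝ => s ^ 2) (A ∩ Set.Ioi 0) := by
    intro a ha b hb h
    have := congrArg Real.sqrt h
    rwa [Real.sqrt_sq ha.2.le, Real.sqrt_sq hb.2.le] at this
  rw [hset, lintegral_image_eq_lintegral_abs_deriv_mul'
    (hA.inter measurableSet_Ioi)
    (f' := fun x => 2 * x)
    (fun x _ => by simpa using (hasDerivAt_pow 2 x).hasDerivWithinAt) hinj]
  apply setLIntegral_congr_fun (hA.inter measurableSet_Ioi)
  intro s hs
  dsimp only
  obtain ⟨hsA, hs0⟩ := hs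
  have hs' : (0:ℝ) < s := hs0
  rw [Real.sqrt_sq hs0.le, abs_of_pos (by linarith : (0:ℝ) < 2 * s),
    ← ENNReal.ofReal_mul (by positivity)]
  congr 1
  have hπ := Real.pi_pos
  rw [mul_div_assoc', div_eq_div_iff (by positivity) (by positivity)]
  ring
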